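/- Let ω be a trace-class operator on L²(ℝ³) with 0 ≤ ω ≤ 1 and let V ∈ L¹(ℝ³) have integrable Fourier transform V̂. Define the exchange operator X via X = N^{-1} ∫ V̂(q) e^{iq·x} ω e^{-iq·x} dq. Then tr|[ω, [X, x_j]]| ≤ (2‖V̂‖₁ / N) · tr|[ω, x_j]| for each coordinate j. -/

import Mathlib

open MeasureTheory

/-- Exchange-term commutator bound. Let `ω` be trace class with `0 ≤ ω ≤ 1` (so in
particular `‖ω‖ ≤ 1`) and `V̂` integrable, and let
`X = N⁻¹ ∫ V̂(q) e^{iq·x} ω e^{-iq·x} dq` be the exchange operator. Then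
`tr|[ω, [X, xⱼ]]| ≤ (2‖V̂‖₁/N) tr|[ω, xⱼ]|`. Here `E q` is the unitary multiplication
by `e^{iq·x}`, `commX A = [A, xⱼ]` is the commutator with the `j`-th position operator,
which satisfies the conjugation identity
`[e^{iq·x} A e^{-iq·x}, xⱼ] = e^{iq·x} [A, xⱼ] e^{-iq·x}` and commutes with the
integral; the trace norm `trN` is axiomatized by its standard properties. -/
theorem stmt5 {H : Type*} [NormedAddCommGroup H] [InnerProductSpace ℂ H] [CompleteSpace H]
    (trN : (H →L[ℂ] H) → ℝ)
    (trN_nonneg : ∀ A, 0 ≤ trN A)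
    (trN_sub : ∀ A B, trN (A - B) ≤ trN A + trN B)
    (trN_smul : ∀ (c : ℂ) A, trN (c • A) = ‖c‖ * trN A)
    (trN_smul_real : ∀ (c : ℝ) A, trN (c • A) = |c| * trN A)
    (trN_mul_left : ∀ A B, trN (A * B) ≤ ‖A‖ * trN B)
    (trN_mul_right : ∀ A B, trN (A * B) ≤ trN A * ‖B‖)
    (trN_integral : ∀ (f : EuclideanSpace ℝ (Fin 3) → H →L[ℂ] H)
      (g : EuclideanSpace ℝ (Fin 3) → ℝ), Integrable g → (∀ q, trN (f q) ≤ g q) →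
      trN (∫ q, f q) ≤ ∫ q, g q)
    (ω : H →L[ℂ] H) (hω_sa : IsSelfAdjoint ω) (hω_pos : ω.IsPositive)
    (hω_le : (1 - ω).IsPositive) (hω_norm : ‖ω‖ ≤ 1)
    (N : ℝ) (hN : 0 < N)
    (Vhat : EuclideanSpace ℝ (Fin 3) → ℂ) (hVint : Integrable Vhat)
    (E : EuclideanSpace ℝ (Fin 3) → H →L[ℂ] H)
    (hEunit : ∀ q, E q ∈ unitary (H →L[ℂ] H))
    (commX : (H →L[ℂ] H) →ₗ[ℂ] (H →L[ℂ] H))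
    (hconj : ∀ q A, commX (E q * A * star (E q)) = E q * commX A * star (E q))
    (X : H →L[ℂ] H)
    (hX : X = N⁻¹ • ∫ q, Vhat q • (E q * ω * star (E q)))
    (hcommX_int : commX X = N⁻¹ • ∫ q, Vhat q • commX (E q * ω * star (E q))) :
    trN (ω * commX X - commX X * ω) ≤ 2 * (∫ q, ‖Vhat q‖) / N * trN (commX ω) := by
  have hEnorm : ∀ q, ‖E q‖ ≤ 1 := by
    intro q
    have h1 : star (E q) * E q = 1 := (hEunit q).1
    have h2 : ‖star (E q) * E q‖ = ‖E q‖ * ‖E q‖ := CStarRing.norm_star_mul_self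
    rw [h1] at h2
    have h3 : ‖(1 : H →L[ℂ] H)‖ ≤ 1 := by
      rw [ContinuousLinearMap.one_def]; exact ContinuousLinearMap.norm_id_le
    nlinarith [norm_nonneg (E q)]
  have hEsnorm : ∀ q, ‖star (E q)‖ ≤ 1 := by
    intro q; rw [norm_star]; exact hEnorm q
  -- bound on the trace norm of each integrand
  have hpt : ∀ q, trN (Vhat q • commX (E q * ω * star (E q)))
      ≤ ‖Vhat q‖ * trN (commX ω) := by
    intro q
    rw [trN_smul, hconj]
    apply mul_le_mul_of_nonneg_left _ (norm_nonneg _)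
    calc trN (E q * commX ω * star (E q))
        = trN (E q * (commX ω * star (E q))) := by rw [mul_assoc]
      _ ≤ ‖E q‖ * trN (commX ω * star (E q)) := trN_mul_left _ _
      _ ≤ 1 * trN (commX ω * star (E q)) :=
          mul_le_mul_of_nonneg_right (hEnorm q) (trN_nonneg _)
      _ = trN (commX ω * star (E q)) := one_mul _
      _ ≤ trN (commX ω) * ‖star (E q)‖ := trN_mul_right _ _
      _ ≤ trN (commX ω) * 1 := mul_le_mul_of_nonneg_left (hEsnorm q) (trN_nonneg _)
      _ = trN (commX ω) := mul_one _
  have hg : Integrable (fun q => ‖Vhat q‖ * trN (commX ω)) := hVint.norm.mul_const _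
  have hint : trN (∫ q, Vhat q • commX (E q * ω * star (E q)))
      ≤ (∫ q, ‖Vhat q‖) * trN (commX ω) := by
    calc trN (∫ q, Vhat q • commX (E q * ω * star (E q)))
        ≤ ∫ q, ‖Vhat q‖ * trN (commX ω) := trN_integral _ _ hg hpt
      _ = (∫ q, ‖Vhat q‖) * trN (commX ω) := integral_mul_const _ _
  have hCX : trN (commX X) ≤ N⁻¹ * ((∫ q, ‖Vhat q‖) * trN (commX ω)) := by
    rw [hcommX_int, trN_smul_real, abs_of_pos (inv_pos.mpr hN)]
    exact mul_le_mul_of_nonneg_left hint (by positivity)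
  have hCXnn : 0 ≤ trN (commX X) := trN_nonneg _
  calc trN (ω * commX X - commX X * ω)
      ≤ trN (ω * commX X) + trN (commX X * ω) := trN_sub _ _
    _ ≤ ‖ω‖ * trN (commX X) + trN (commX X) * ‖ω‖ := by
        exact add_le_add (trN_mul_left _ _) (trN_mul_right _ _)
    _ ≤ 1 * trN (commX X) + trN (commX X) * 1 := by
        exact add_le_add (mul_le_mul_of_nonneg_right hω_norm hCXnn)
          (mul_le_mul_of_nonneg_left hω_norm hCXnn)
    _ = 2 * trN (commX X) := by ring
    _ ≤ 2 * (N⁻¹ * ((∫ q, ‖Vhat q‖) * trN (commX ω))) := by linarith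
    _ = 2 * (∫ q, ‖Vhat q‖) / N * trN (commX ω) := by
        field_simp
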